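/- Every feasible batch-active schedule of a PFB instance is Γ-active, i.e., c_{i,j} ∈ Γ_i for all machines i and jobs j. -/

import Mathlib

/-- A PFB instance has `m+1` machines (indexed by `Fin (m+1)`, so at least one) and
`n+1` jobs (indexed by `Fin (n+1)`, so at least one). `p i` is the processing time of
machine `i`, `b i` its maximum batch size, `r j` the release date of job `j`.
A schedule `c` assigns to machine `i` and job `j` the completion time `c i j`.
`Feasible p b r c` says: (i) each job finishes on the first machine no earlier than its
release date plus `p 0`; (ii) consecutive machines leave enough processing time;
(iii) two jobs with different completion times on a machine differ by at least the
processing time (jobs with equal completion time form one batch); (iv) at most `b i`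
jobs complete at any given time on machine `i`. -/
def Feasible {m n : ℕ} (p b : Fin (m + 1) → ℕ) (r : Fin (n + 1) → ℕ)
    (c : Fin (m + 1) → Fin (n + 1) → ℕ) : Prop :=
  (∀ j, r j + p 0 ≤ c 0 j) ∧
  (∀ (i : Fin m) (j : Fin (n + 1)), c i.castSucc j + p i.succ ≤ c i.succ j) ∧
  (∀ (i : Fin (m + 1)) (j j' : Fin (n + 1)),
      c i j ≠ c i j' → c i j + p i ≤ c i j' ∨ c i j' + p i ≤ c i j) ∧
  (∀ (i : Fin (m + 1)) (t : ℕ),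
      (Finset.univ.filter (fun j => c i j = t)).card ≤ b i)

/-- `c` is a permutation schedule ordered by the permutation `σ`:
on every machine the completion times are nondecreasing along `σ`. -/
def OrderedBy {m n : ℕ} (c : Fin (m + 1) → Fin (n + 1) → ℕ)
    (σ : Equiv.Perm (Fin (n + 1))) : Prop :=
  ∀ i : Fin (m + 1), Monotone fun j => c i (σ j)

/-- The schedule obtained from `c` by starting the batch completing at time `t` on
machine `i` one time unit earlier. -/
def shiftBatch {m n : ℕ} (c : Fin (m + 1) → Fin (n + 1) → ℕ) (i : Fin (m + 1))
    (t : ℕ) : Fin (m + 1) → Fin (n + 1) → ℕ :=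
  fun i' j => if i' = i ∧ c i' j = t then c i' j - 1 else c i' j

/-- A feasible schedule is batch-active if no batch can be started earlier. -/
def BatchActive {m n : ℕ} (p b : Fin (m + 1) → ℕ) (r : Fin (n + 1) → ℕ)
    (c : Fin (m + 1) → Fin (n + 1) → ℕ) : Prop :=
  ∀ (i : Fin (m + 1)) (t : ℕ), (∃ j, c i j = t) →
    ¬ Feasible p b r (shiftBatch c i t)

/-- `Gamma p r i` is the set
`{ r j' + ∑_{i' ≤ i} λ_{i'}·p_{i'} | j' a job, λ_{i'} ∈ {1,…,n+1} }`. -/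
def Gamma {m n : ℕ} (p : Fin (m + 1) → ℕ) (r : Fin (n + 1) → ℕ)
    (i : Fin (m + 1)) : Set ℕ :=
  { x | ∃ (j' : Fin (n + 1)) (lam : Fin (m + 1) → ℕ),
      (∀ i' ≤ i, 1 ≤ lam i' ∧ lam i' ≤ n + 1) ∧
      x = r j' + ∑ i' ∈ Finset.Iic i, lam i' * p i' }

section
variable {m n : ℕ} (p b : Fin (m + 1) → ℕ) (r : Fin (n + 1) → ℕ)
  (c : Fin (m + 1) → Fin (n + 1) → ℕ)

def PFB.base (i : Fin (m + 1)) (j : Fin (n + 1)) : ℕ :=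
  Fin.cases (r j) (fun i₀ => c i₀.castSucc j) i

@[simp] lemma base_zero (j) : PFB.base r c 0 j = r j := rfl
@[simp] lemma base_succ (i₀ : Fin m) (j) : PFB.base r c i₀.succ j = c i₀.castSucc j := by
  simp [PFB.base]

lemma hbase (hc : Feasible p b r c) : ∀ i j, PFB.base r c i j + p i ≤ c i j := by
  intro i j
  induction i using Fin.cases with
  | zero => simpa using hc.1 j
  | succ i₀ => simpa using hc.2.1 i₀ j

lemma shift_in {i : Fin (m+1)} {t : ℕ} {j} (h : c i j = t) :
    shiftBatch c i t i j = t - 1 := by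
  simp [shiftBatch, h]

lemma shift_out {i : Fin (m+1)} {t : ℕ} {i' j} (h : ¬(i' = i ∧ c i' j = t)) :
    shiftBatch c i t i' j = c i' j := by
  simp only [shiftBatch]; rw [if_neg h]

lemma dich (hp : ∀ i, 1 ≤ p i) (hc : Feasible p b r c) (hba : BatchActive p b r c)
    (i : Fin (m+1)) (t : ℕ) (hex : ∃ j, c i j = t) :
    (∃ j, c i j = t ∧ PFB.base r c i j + p i = t) ∨ (∃ j', c i j' + p i = t) := by
  by_contra hcon
  push_neg at hcon
  obtain ⟨hng, hne⟩ := hcon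
  obtain ⟨jw, hjw⟩ := hex
  have ht1 : 1 ≤ t := by
    have := hbase p b r c hc i jw; have := hp i; omega
  apply hba i t ⟨jw, hjw⟩
  refine ⟨?_, ?_, ?_, ?_⟩
  · -- (i)
    intro j
    by_cases h : (0 : Fin (m+1)) = i ∧ c 0 j = t
    · obtain ⟨h1, h2⟩ := h
      subst h1
      have hle := hc.1 j
      have hne2 := hng j h2
      simp only [base_zero] at hne2
      rw [shift_in c h2]
      omega
    · rw [shift_out c h]
      exact hc.1 j
  · -- (ii)
    intro i₀ j
    by_cases h : i₀.succ = i ∧ c i₀.succ j = t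
    · obtain ⟨h1, h2⟩ := h
      subst h1
      have hle := hc.2.1 i₀ j
      have hne2 := hng j h2
      simp only [base_succ] at hne2
      rw [shift_in c h2,
        shift_out c (fun hh => absurd hh.1 (ne_of_lt (Fin.castSucc_lt_succ : i₀.castSucc < i₀.succ)))]
      omega
    · rw [shift_out c h]
      calc shiftBatch c i t i₀.castSucc j + p i₀.succ
          ≤ c i₀.castSucc j + p i₀.succ := by
            have : shiftBatch c i t i₀.castSucc j ≤ c i₀.castSucc j := by
              simp only [shiftBatch]; split <;> omega
            omega
        _ ≤ c i₀.succ j := hc.2.1 i₀ j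
  · -- (iii)
    intro i' j j' hnejj
    by_cases hii : i' = i
    · subst hii
      by_cases hj : c i' j = t <;> by_cases hj' : c i' j' = t
      · exfalso; apply hnejj; rw [shift_in c hj, shift_in c hj']
      · have hsep := hc.2.2.1 i' j j' (by rw [hj]; exact fun e => hj' e.symm)
        have h2 := hne j'
        rw [shift_in c hj, shift_out c (fun hh => hj' hh.2)] at *
        rw [hj] at hsep
        have hpi := hp i'
        omega
      · have hsep := hc.2.2.1 i' j j' (by rw [hj']; exact fun e => hj e)
        have h2 := hne j
        rw [shift_in c hj', shift_out c (fun hh => hj hh.2)] at *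
        rw [hj'] at hsep
        have hpi := hp i'
        omega
      · rw [shift_out c (fun hh => hj hh.2), shift_out c (fun hh => hj' hh.2)] at hnejj ⊢
        exact hc.2.2.1 i' j j' hnejj
    · rw [shift_out c (fun hh => hii hh.1), shift_out c (fun hh => hii hh.1)] at hnejj ⊢
      exact hc.2.2.1 i' j j' hnejj
  · -- (iv)
    intro i' t'
    by_cases hii : i' = i
    · subst hii
      by_cases ht : t' = t
      · subst ht
        have he : (Finset.univ.filter (fun j => shiftBatch c i' t' i' j = t')) = ∅ := by
          ext j
          simp only [Finset.mem_filter, Finset.mem_univ, true_and, Finset.notMem_empty,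
            iff_false]
          by_cases hcj : c i' j = t'
          · rw [shift_in c hcj]; omega
          · rw [shift_out c (fun hh => hcj hh.2)]; exact hcj
        rw [he]
        simp only [Finset.card_empty]
        exact Nat.zero_le _
      · by_cases ht2 : t' = t - 1
        · subst ht2
          have hkey : ∀ j, c i' j ≠ t - 1 := by
            intro j hj
            have hsep := hc.2.2.1 i' j jw (by rw [hj, hjw]; omega)
            rw [hj, hjw] at hsep
            have hnej := hne j
            rw [hj] at hnej
            have hpi := hp i'
            omega
          have he : (Finset.univ.filter (fun j => shiftBatch c i' t i' j = t - 1))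
              = Finset.univ.filter (fun j => c i' j = t) := by
            ext j
            simp only [Finset.mem_filter, Finset.mem_univ, true_and]
            by_cases hcj : c i' j = t
            · rw [shift_in c hcj]; simp [hcj]
            · rw [shift_out c (fun hh => hcj hh.2)]
              exact ⟨fun e => absurd e (hkey j), fun e => absurd e hcj⟩
          rw [he]
          exact hc.2.2.2 i' t
        · have he : (Finset.univ.filter (fun j => shiftBatch c i' t i' j = t'))
              = Finset.univ.filter (fun j => c i' j = t') := by
            ext j
            simp only [Finset.mem_filter, Finset.mem_univ, true_and]
            by_cases hcj : c i' j = t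
            · rw [shift_in c hcj]
              exact ⟨fun e => absurd e.symm ht2, fun e => absurd (e.symm.trans hcj) ht⟩
            · rw [shift_out c (fun hh => hcj hh.2)]
          rw [he]
          exact hc.2.2.2 i' t'
    · have he : (Finset.univ.filter (fun j => shiftBatch c i t i' j = t'))
          = Finset.univ.filter (fun j => c i' j = t') := by
        ext j
        simp only [Finset.mem_filter, Finset.mem_univ, true_and]
        rw [shift_out c (fun hh => hii hh.1)]
      rw [he]
      exact hc.2.2.2 i' t'

end

section
variable {m n : ℕ} {p b : Fin (m + 1) → ℕ} {r : Fin (n + 1) → ℕ}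
  {c : Fin (m + 1) → Fin (n + 1) → ℕ}

lemma chain (hp : ∀ i, 1 ≤ p i) (hc : Feasible p b r c) (hba : BatchActive p b r c)
    (i : Fin (m+1)) :
    ∀ t : ℕ, (∃ j, c i j = t) →
      ∃ (j₀ : Fin (n+1)) (k : ℕ), t = PFB.base r c i j₀ + (k+1) * p i ∧
        ∀ l ≤ k, ∃ j, c i j = PFB.base r c i j₀ + (l+1) * p i := by
  intro t
  induction t using Nat.strong_induction_on with
  | _ t ih =>
    intro hex
    rcases dich p b r c hp hc hba i t hex with ⟨j₀, hj₀, hg⟩ | ⟨j', hj'⟩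
    · refine ⟨j₀, 0, by omega, ?_⟩
      intro l hl
      interval_cases l
      exact ⟨j₀, by omega⟩
    · have hlt : c i j' < t := by have := hp i; omega
      obtain ⟨j₀, k, hk, hch⟩ := ih (c i j') hlt ⟨j', rfl⟩
      refine ⟨j₀, k + 1, by rw [← hj', hk]; ring, ?_⟩
      intro l hl
      rcases Nat.lt_or_ge l (k+1) with h | h
      · exact hch l (by omega)
      · have : l = k + 1 := by omega
        subst this
        obtain ⟨jt, hjt⟩ := hex
        exact ⟨jt, by rw [hjt, ← hj', hk]; ring⟩

lemma chain_bound (hp : ∀ i, 1 ≤ p i) {i : Fin (m+1)} {g k : ℕ}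
    (hch : ∀ l ≤ k, ∃ j, c i j = g + (l+1) * p i) : k ≤ n := by
  have hinj : Set.InjOn (fun l => g + (l+1) * p i) (Finset.range (k+1)) := by
    intro a _ b _ hab
    simp only at hab
    have := hp i
    nlinarith [Nat.le_of_eq hab, Nat.le_of_eq hab.symm]
  have hsub : ∀ l ∈ Finset.range (k+1), (g + (l+1) * p i) ∈ Finset.image (c i) Finset.univ := by
    intro l hl
    obtain ⟨j, hj⟩ := hch l (by simpa using Nat.lt_succ_iff.mp (Finset.mem_range.mp hl))
    exact Finset.mem_image.mpr ⟨j, Finset.mem_univ j, hj⟩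
  have := Finset.card_le_card_of_injOn _ hsub hinj
  have h2 : (Finset.image (c i) Finset.univ).card ≤ n + 1 := by
    calc (Finset.image (c i) Finset.univ).card ≤ (Finset.univ : Finset (Fin (n+1))).card :=
          Finset.card_image_le
      _ = n + 1 := by simp
  simp only [Finset.card_range] at this
  omega

end

section
variable {m n : ℕ} {p b : Fin (m + 1) → ℕ} {r : Fin (n + 1) → ℕ}
  {c : Fin (m + 1) → Fin (n + 1) → ℕ}

lemma Iic_zero : Finset.Iic (0 : Fin (m+1)) = {0} := by
  ext x
  simp [Fin.le_zero_iff]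

lemma Iic_succ (i₀ : Fin m) :
    Finset.Iic (i₀.succ : Fin (m+1)) = insert i₀.succ (Finset.Iic i₀.castSucc) := by
  ext x
  simp only [Finset.mem_Iic, Finset.mem_insert]
  constructor
  · intro h
    rcases eq_or_lt_of_le h with h | h
    · exact Or.inl h
    · exact Or.inr (Fin.le_castSucc_iff.mpr h)
  · rintro (h | h)
    · exact h.le
    · exact le_of_lt (Fin.le_castSucc_iff.mp h)

theorem stmt4' (hp : ∀ i, 1 ≤ p i) (hb : ∀ i, 1 ≤ b i ∧ b i ≤ n + 1)
    (hc : Feasible p b r c) (hba : BatchActive p b r c) :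
    ∀ (i : Fin (m + 1)) (j : Fin (n + 1)), c i j ∈ Gamma p r i := by
  intro i
  induction i using Fin.induction with
  | zero =>
    intro j
    obtain ⟨j₀, k, hk, hch⟩ := chain hp hc hba 0 (c 0 j) ⟨j, rfl⟩
    have hkn : k ≤ n := chain_bound hp hch
    refine ⟨j₀, fun _ => k + 1, fun i' _ => ⟨Nat.le_add_left 1 k, Nat.succ_le_succ hkn⟩, ?_⟩
    rw [Iic_zero, Finset.sum_singleton]
    simpa using hk
  | succ i₀ ihm =>
    intro j
    obtain ⟨j₀, k, hk, hch⟩ := chain hp hc hba i₀.succ (c i₀.succ j) ⟨j, rfl⟩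
    have hkn : k ≤ n := chain_bound hp hch
    simp only [base_succ] at hk
    obtain ⟨j', lam, hlam, hsum⟩ := ihm j₀
    refine ⟨j', fun i' => if i' = i₀.succ then k + 1 else lam i', ?_, ?_⟩
    · intro i' hi'
      show 1 ≤ (if i' = i₀.succ then k + 1 else lam i') ∧
        (if i' = i₀.succ then k + 1 else lam i') ≤ n + 1
      by_cases h : i' = i₀.succ
      · rw [if_pos h]; omega
      · rw [if_neg h]
        exact hlam i' (Fin.le_castSucc_iff.mpr (lt_of_le_of_ne hi' h))
    · have hnotin : i₀.succ ∉ Finset.Iic i₀.castSucc := by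
        simp only [Finset.mem_Iic]
        exact fun h => absurd (lt_of_le_of_lt h (Fin.castSucc_lt_succ : i₀.castSucc < i₀.succ)) (lt_irrefl _)
      rw [Iic_succ, Finset.sum_insert hnotin]
      simp only [if_true]
      have hrest : ∑ i' ∈ Finset.Iic i₀.castSucc,
          (if i' = i₀.succ then k + 1 else lam i') * p i'
          = ∑ i' ∈ Finset.Iic i₀.castSucc, lam i' * p i' := by
        apply Finset.sum_congr rfl
        intro x hx
        rw [if_neg (fun h : x = i₀.succ => hnotin (h ▸ hx))]
      rw [hrest]
      omega

end

/-- every feasible batch-active schedule is Γ-active, i.e. all its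
completion times lie in the sets `Gamma p r i`. -/
theorem stmt4 {m n : ℕ} (p b : Fin (m + 1) → ℕ) (r : Fin (n + 1) → ℕ)
    (hp : ∀ i, 1 ≤ p i) (hb : ∀ i, 1 ≤ b i ∧ b i ≤ n + 1)
    (c : Fin (m + 1) → Fin (n + 1) → ℕ) (hc : Feasible p b r c)
    (hba : BatchActive p b r c) :
    ∀ (i : Fin (m + 1)) (j : Fin (n + 1)), c i j ∈ Gamma p r i :=
  stmt4' hp hb hc hba
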